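/- The measure ρ on I = [0,1] ∪ {∞} with ρ([0,t]) = t/2 for t ∈ [0,1] and ρ({∞}) = 1/2 solves the recursive distributional equation Y ≐ χ[τ,κ](Y₁,Y₂), where τ is uniform on [0,1], κ is uniform on {1,2}, Y₁,Y₂ are independent copies of Y, all independent, and χ[τ,1](x,y) = x if x > τ, = ∞ if x ≤ τ, while χ[τ,2](x,y) = x∧y. -/

import Mathlib

open MeasureTheory Set
open scoped ENNReal

/-- The map χ[τ,κ](x,y) on I = [0,1] ∪ {∞}, encoded in ℝ≥0∞, with κ ∈ {1,2} encoded
as a Bool (false ↔ κ = 1, true ↔ κ = 2):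
χ[τ,1](x,y) = x if x > τ, ∞ if x ≤ τ; χ[τ,2](x,y) = min x y. -/
noncomputable def chiMap (t : ℝ) (k : Bool) (x y : ℝ≥0∞) : ℝ≥0∞ :=
  if k then min x y else (if ENNReal.ofReal t < x then x else ⊤)

/-- The uniform distribution on {1,2}, encoded as a measure on Bool. -/
noncomputable def unifBool : Measure Bool :=
  (2:ℝ≥0∞)⁻¹ • Measure.dirac true + (2:ℝ≥0∞)⁻¹ • Measure.dirac false

/-- The measure ρ on I = [0,1] ∪ {∞} with ρ([0,t]) = t/2 and ρ({∞}) = 1/2 solves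
the RDE Y ≐ χ[τ,κ](Y₁,Y₂), with τ uniform on [0,1], κ uniform on {1,2}, and
Y₁, Y₂ i.i.d. ~ ρ, all independent. -/
instance : IsProbabilityMeasure unifBool := ⟨by
  simp [unifBool, ENNReal.inv_two_add_inv_two]⟩

lemma measurable_chi : Measurable
    (fun p : (ℝ × Bool) × ℝ≥0∞ × ℝ≥0∞ => chiMap p.1.1 p.1.2 p.2.1 p.2.2) := by
  unfold chiMap
  apply Measurable.ite (measurableSet_eq_fun (by fun_prop) measurable_const
    (f := fun p : (ℝ × Bool) × ℝ≥0∞ × ℝ≥0∞ => p.1.2) (g := fun _ => true))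
  · fun_prop
  · apply Measurable.ite _ (by fun_prop) measurable_const
    exact measurableSet_lt (by fun_prop) (by fun_prop)

lemma lintegral_unifBool (f : Bool → ℝ≥0∞) :
    ∫⁻ k, f k ∂unifBool = 2⁻¹ * f true + 2⁻¹ * f false := by
  simp [unifBool, lintegral_add_measure, lintegral_smul_measure, lintegral_dirac]

lemma lint_key (s : ℝ) (hs0 : 0 ≤ s) (hs1 : s ≤ 1) :
    ∫⁻ t in Icc (0:ℝ) 1, ENNReal.ofReal ((s - t)/2) = ENNReal.ofReal (s^2/4) := by
  set g : ℝ → ℝ := fun t => max ((s - t)/2) 0 with hg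
  have hgc : Continuous g := by fun_prop
  have h1 : ∀ t : ℝ, ENNReal.ofReal ((s - t)/2) = ENNReal.ofReal (g t) := by
    intro t
    rcases le_or_gt 0 ((s - t)/2) with h | h
    · simp [hg, max_eq_left h]
    · rw [ENNReal.ofReal_of_nonpos h.le, hg]
      simp [max_eq_right h.le]
  simp_rw [h1]
  rw [← ofReal_integral_eq_lintegral_ofReal
    (hgc.integrableOn_Icc) (ae_of_all _ fun t => le_max_right _ _)]
  congr 1
  rw [integral_Icc_eq_integral_Ioc, ← intervalIntegral.integral_of_le (by norm_num : (0:ℝ) ≤ 1)]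
  have hsplit : (∫ t in (0:ℝ)..s, g t) + ∫ t in s..(1:ℝ), g t = ∫ t in (0:ℝ)..(1:ℝ), g t :=
    intervalIntegral.integral_add_adjacent_intervals
      (hgc.intervalIntegrable _ _) (hgc.intervalIntegrable _ _)
  rw [← hsplit]
  have e1 : ∫ t in (0:ℝ)..s, g t = ∫ t in (0:ℝ)..s, (s - t)/2 := by
    apply intervalIntegral.integral_congr
    intro t ht
    rw [uIcc_of_le hs0] at ht
    exact max_eq_left (by cases ht with | intro h1 h2 => linarith)
  have e2 : ∫ t in s..(1:ℝ), g t = 0 := by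
    rw [show (0:ℝ) = ∫ t in s..(1:ℝ), (0:ℝ) by simp]
    apply intervalIntegral.integral_congr
    intro t ht
    rw [uIcc_of_le hs1] at ht
    exact max_eq_right (by cases ht with | intro h1 h2 => linarith)
  rw [e1, e2, add_zero]
  have : ∀ t : ℝ, (s - t)/2 = s/2 - t * (1/2) := by intro t; ring
  simp_rw [this]
  rw [intervalIntegral.integral_sub (intervalIntegrable_const)
    (((by fun_prop : Continuous fun t:ℝ => t * (1/2))).intervalIntegrable _ _),
    intervalIntegral.integral_const, intervalIntegral.integral_mul_const, integral_id]
  simp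
  ring


theorem stmt1 (ρ : Measure ℝ≥0∞) [IsProbabilityMeasure ρ]
    (hcdf : ∀ t : ℝ, t ∈ Set.Icc (0:ℝ) 1 →
      ρ (Set.Icc 0 (ENNReal.ofReal t)) = ENNReal.ofReal (t/2))
    (hinf : ρ {⊤} = 1/2) :
    Measure.map (fun p : (ℝ × Bool) × ℝ≥0∞ × ℝ≥0∞ => chiMap p.1.1 p.1.2 p.2.1 p.2.2)
      (((volume.restrict (Set.Icc (0:ℝ) 1)).prod unifBool).prod (ρ.prod ρ)) = ρ := by
  haveI hm1 : IsProbabilityMeasure (volume.restrict (Set.Icc (0:ℝ) 1)) := ⟨by simp⟩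
  set m1 := (volume.restrict (Set.Icc (0:ℝ) 1)).prod unifBool with hm1def
  haveI : IsProbabilityMeasure (m1.prod (ρ.prod ρ)) := by infer_instance
  haveI : IsProbabilityMeasure (Measure.map
      (fun p : (ℝ × Bool) × ℝ≥0∞ × ℝ≥0∞ => chiMap p.1.1 p.1.2 p.2.1 p.2.2)
      (m1.prod (ρ.prod ρ))) := Measure.isProbabilityMeasure_map measurable_chi.aemeasurable
  -- basic CDF facts
  have hIic : ∀ t : ℝ, t ∈ Set.Icc (0:ℝ) 1 →
      ρ (Set.Iic (ENNReal.ofReal t)) = ENNReal.ofReal (t/2) := by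
    intro t ht
    rw [← hcdf t ht]
    congr 1
    exact (Icc_bot (a := ENNReal.ofReal t)).symm ▸ rfl
  have hhi : ∀ a : ℝ≥0∞, 1 ≤ a → a ≠ ⊤ → ρ (Set.Iic a) = ENNReal.ofReal (1/2) := by
    intro a ha hat
    apply le_antisymm
    · have h1 : Set.Iic a ⊆ {(⊤:ℝ≥0∞)}ᶜ := by
        intro x hx hx2
        simp only [mem_singleton_iff] at hx2
        exact hat (top_le_iff.mp (hx2 ▸ hx))
      calc ρ (Set.Iic a) ≤ ρ {(⊤:ℝ≥0∞)}ᶜ := measure_mono h1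
        _ = 1 - 1/2 := by rw [measure_compl (measurableSet_singleton _) (measure_ne_top ρ _),
            hinf, measure_univ]
        _ = ENNReal.ofReal (1/2) := by
            rw [ENNReal.ofReal_div_of_pos] <;> norm_num
    · have := hIic 1 (by norm_num)
      simp only [ENNReal.ofReal_one] at this
      calc ENNReal.ofReal (1/2) = ρ (Set.Iic 1) := this.symm
        _ ≤ ρ (Set.Iic a) := measure_mono (Iic_subset_Iic.mpr ha)
  refine Measure.ext_of_Iic _ ρ (fun a => ?_)
  rw [Measure.map_apply measurable_chi measurableSet_Iic]
  rcases eq_or_ne a ⊤ with rfl | hat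
  · simp only [Iic_top, preimage_univ]
    rw [measure_univ, measure_univ]
  -- setup: s = min a.toReal 1
  set s : ℝ := min a.toReal 1 with hs
  have hs0 : 0 ≤ s := le_min ENNReal.toReal_nonneg zero_le_one
  have hs1 : s ≤ 1 := min_le_right _ _
  have hsa : ENNReal.ofReal s ≤ a := by
    calc ENNReal.ofReal s ≤ ENNReal.ofReal a.toReal :=
      ENNReal.ofReal_le_ofReal (min_le_left _ _)
    _ = a := ENNReal.ofReal_toReal hat
  have hFa : ρ (Set.Iic a) = ENNReal.ofReal (s/2) := by
    rcases le_or_gt a 1 with h | h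
    · have hta : a.toReal ≤ 1 := by
        rw [show (1:ℝ) = (1:ℝ≥0∞).toReal by simp]
        exact ENNReal.toReal_mono ENNReal.one_ne_top h
      have hse : s = a.toReal := min_eq_left hta
      have : ENNReal.ofReal s = a := by rw [hse, ENNReal.ofReal_toReal hat]
      rw [← this, hIic s ⟨hs0, hs1⟩]
    · have hta : (1:ℝ) ≤ a.toReal := by
        rw [show (1:ℝ) = (1:ℝ≥0∞).toReal by simp]
        exact ENNReal.toReal_mono hat h.le
      rw [hhi a h.le hat, show s = 1 from min_eq_right hta]
  have hIoi : ρ (Set.Ioi a) = ENNReal.ofReal (1 - s/2) := by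
    rw [← Set.compl_Iic, measure_compl measurableSet_Iic (measure_ne_top ρ _), measure_univ,
      hFa, ← ENNReal.ofReal_one, ← ENNReal.ofReal_sub _ (by linarith)]
  have hIocf : ∀ t : ℝ, t ∈ Set.Icc (0:ℝ) 1 →
      ρ (Set.Ioc (ENNReal.ofReal t) a) = ENNReal.ofReal ((s - t)/2) := by
    intro t ht
    rcases le_or_gt t s with h | h
    · have h1 : ENNReal.ofReal t ≤ a := le_trans (ENNReal.ofReal_le_ofReal h) hsa
      rw [← Set.Iic_sdiff_Iic, measure_diff (Iic_subset_Iic.mpr h1) nullMeasurableSet_Iic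
        (measure_ne_top ρ _), hFa, hIic t ht, ← ENNReal.ofReal_sub _ (by linarith [ht.1])]
      congr 1; ring
    · have ha1 : a ≤ 1 := by
        by_contra hc
        push_neg at hc
        have : (1:ℝ) ≤ a.toReal := by
          rw [show (1:ℝ) = (1:ℝ≥0∞).toReal by simp]
          exact ENNReal.toReal_mono hat hc.le
        have : s = 1 := min_eq_right this
        linarith [ht.2]
      have hta : a.toReal ≤ 1 := by
        rw [show (1:ℝ) = (1:ℝ≥0∞).toReal by simp]
        exact ENNReal.toReal_mono ENNReal.one_ne_top ha1
      have hse : ENNReal.ofReal s = a := by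
        rw [show s = a.toReal from min_eq_left hta, ENNReal.ofReal_toReal hat]
      have hempty : Set.Ioc (ENNReal.ofReal t) a = ∅ := by
        apply Set.Ioc_eq_empty
        rw [← hse]
        exact not_lt.mpr (ENNReal.ofReal_le_ofReal h.le)
      rw [hempty, measure_empty, Eq.comm, ENNReal.ofReal_eq_zero]
      linarith
  -- compute the preimage measure
  set S := (fun p : (ℝ × Bool) × ℝ≥0∞ × ℝ≥0∞ => chiMap p.1.1 p.1.2 p.2.1 p.2.2) ⁻¹'
    Set.Iic a with hS
  have hSm : MeasurableSet S := measurable_chi measurableSet_Iic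
  rw [Measure.prod_apply hSm]
  set G : ℝ × Bool → ℝ≥0∞ := fun tk =>
    if tk.2 then 1 - (ENNReal.ofReal (1 - s/2))^2 else ENNReal.ofReal ((s - tk.1)/2) with hG
  have hGm : Measurable G := by
    apply Measurable.ite (measurableSet_eq_fun (by fun_prop) measurable_const
      (f := fun tk : ℝ × Bool => tk.2) (g := fun _ => true)) measurable_const
    exact ENNReal.measurable_ofReal.comp (by fun_prop)
  have hmem : ∀ᵐ tk ∂m1, tk.1 ∈ Set.Icc (0:ℝ) 1 := by
    rw [ae_iff]
    have he : {tk : ℝ × Bool | ¬ tk.1 ∈ Set.Icc (0:ℝ) 1}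
        = (Set.Icc (0:ℝ) 1)ᶜ ×ˢ (Set.univ : Set Bool) := by
      ext tk; simp
    rw [he, hm1def, Measure.prod_prod, Measure.restrict_apply measurableSet_Icc.compl]
    simp
  have hae : ∀ᵐ tk ∂m1, (ρ.prod ρ) (Prod.mk tk ⁻¹' S) = G tk := by
    filter_upwards [hmem] with tk ht
    obtain ⟨t, k⟩ := tk
    cases k with
    | true =>
      have hsec : Prod.mk (t, true) ⁻¹' S = (Set.Ioi a ×ˢ Set.Ioi a)ᶜ := by
        ext xy
        simp only [hS, mem_preimage, mem_Iic, chiMap, if_true, mem_compl_iff, mem_prod,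
          mem_Ioi, not_and_or, not_lt]
        exact min_le_iff
      rw [hsec, measure_compl (measurableSet_Ioi.prod measurableSet_Ioi)
        (measure_ne_top _ _), measure_univ, Measure.prod_prod, hIoi, hG]
      simp [sq]
    | false =>
      have hsec : Prod.mk (t, false) ⁻¹' S
          = (Set.Ioc (ENNReal.ofReal t) a) ×ˢ (Set.univ : Set ℝ≥0∞) := by
        ext xy
        simp only [hS, mem_preimage, mem_Iic, chiMap, Bool.false_eq_true, if_false, mem_prod,
          mem_Ioc, mem_univ, and_true]
        split_ifs with h
        · simp [h]
        · simp [h, top_le_iff, hat]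
      rw [hsec, Measure.prod_prod, measure_univ, mul_one, hIocf t ht, hG]
      simp
  rw [lintegral_congr_ae hae, hm1def, MeasureTheory.lintegral_prod _ hGm.aemeasurable]
  have hinner : ∀ t : ℝ, ∫⁻ k, G (t, k) ∂unifBool
      = 2⁻¹ * (1 - (ENNReal.ofReal (1 - s/2))^2) + 2⁻¹ * ENNReal.ofReal ((s - t)/2) := by
    intro t
    rw [lintegral_unifBool]
    simp [hG]
  simp_rw [hinner]
  rw [lintegral_add_left measurable_const,
    lintegral_const_mul _ (by fun_prop : Measurable fun t : ℝ => ENNReal.ofReal ((s - t)/2)),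
    lint_key s hs0 hs1, lintegral_const, Measure.restrict_apply_univ, Real.volume_Icc, hFa]
  have e1 : (ENNReal.ofReal (1 - s/2))^2 = ENNReal.ofReal ((1 - s/2)^2) :=
    (ENNReal.ofReal_pow (by linarith) 2).symm
  have e2 : (1:ℝ≥0∞) - ENNReal.ofReal ((1 - s/2)^2) = ENNReal.ofReal (1 - (1 - s/2)^2) := by
    rw [← ENNReal.ofReal_one]
    exact (ENNReal.ofReal_sub _ (sq_nonneg _)).symm
  have e3 : ENNReal.ofReal 2⁻¹ = (2:ℝ≥0∞)⁻¹ := by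
    rw [ENNReal.ofReal_inv_of_pos two_pos, ENNReal.ofReal_ofNat]
  rw [e1, e2, ← e3]
  norm_num
  rw [← ENNReal.ofReal_mul (by norm_num), ← ENNReal.ofReal_mul (by norm_num),
    ← ENNReal.ofReal_add (by nlinarith) (by positivity)]
  congr 1
  ring
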